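/- (Metric feasibility of the bounded-gap construction.) Let s ≥ 2 be an integer, n = s², P = {0,…,s−1}² ⊆ ℤ², and A = P \ {(0,0), (s−1,s−1)}. Let V be the disjoint union of A and two new elements u₀, v₀. Define dist on V by: dist(x,y) = ‖x − y‖₂ for x, y ∈ A; dist(x, z) = √(2n) for x ∈ A and z ∈ {u₀, v₀}; dist(u₀, v₀) = 1; and dist(x,x) = 0 for all x. Then dist is a metric on V, and dist satisfies the 2-dimensional spreading constraints. -/

import Mathlib

open scoped BigOperators

/-- Euclidean distance between two points of the integer lattice `ℤ²`. -/
noncomputable def eDist2 (p q : ℤ × ℤ) : ℝ :=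
  Real.sqrt (((p.1 : ℝ) - (q.1 : ℝ)) ^ 2 + ((p.2 : ℝ) - (q.2 : ℝ)) ^ 2)

/-- `dist` is a metric on `V`. -/
def IsMetric {V : Type*} (dist : V → V → ℝ) : Prop :=
  (∀ x, dist x x = 0) ∧ (∀ x y, 0 ≤ dist x y) ∧ (∀ x y, dist x y = dist y x) ∧
  (∀ x y z, dist x z ≤ dist x y + dist y z) ∧ (∀ x y, dist x y = 0 → x = y)

/-- The grid `{0,…,s-1}²` with the two corners `(0,0)` and `(s-1,s-1)` removed. -/
def cornerFreeGrid (s : ℤ) : Set (ℤ × ℤ) :=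
  {p | (0 ≤ p.1 ∧ p.1 < s ∧ 0 ≤ p.2 ∧ p.2 < s) ∧ p ≠ (0, 0) ∧ p ≠ (s - 1, s - 1)}

/-- The vertex set of the bounded-gap construction: the points of
`A = {0,…,s-1}² \ {(0,0),(s-1,s-1)}` together with two extra vertices `u₀, v₀`
(encoded by the two booleans). -/
def GapVertex (s : ℤ) : Type := ↥(cornerFreeGrid s) ⊕ Bool

/-- The distance of the bounded-gap construction: Euclidean distance on `A`,
`√(2n) = √(2s²)` between `A` and `{u₀, v₀}`, and `1` between `u₀` and `v₀`. -/
noncomputable def gapDist (s : ℤ) : GapVertex s → GapVertex s → ℝ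
  | Sum.inl x, Sum.inl y => eDist2 x.1 y.1
  | Sum.inl _, Sum.inr _ => Real.sqrt (2 * (s : ℝ) ^ 2)
  | Sum.inr _, Sum.inl _ => Real.sqrt (2 * (s : ℝ) ^ 2)
  | Sum.inr a, Sum.inr b => if a = b then 0 else 1



noncomputable def emb2 (p : ℤ × ℤ) : EuclideanSpace ℝ (Fin 2) := !₂[(p.1 : ℝ), (p.2 : ℝ)]

lemma eDist2_eq_dist (p q : ℤ × ℤ) : eDist2 p q = dist (emb2 p) (emb2 q) := by
  rw [EuclideanSpace.dist_eq, eDist2]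
  congr 1
  rw [Fin.sum_univ_two]
  simp [emb2, Real.dist_eq, sq_abs]

lemma eDist2_self (p : ℤ × ℤ) : eDist2 p p = 0 := by
  rw [eDist2_eq_dist, dist_self]

lemma eDist2_nonneg (p q : ℤ × ℤ) : 0 ≤ eDist2 p q := Real.sqrt_nonneg _

lemma eDist2_comm (p q : ℤ × ℤ) : eDist2 p q = eDist2 q p := by
  rw [eDist2_eq_dist, eDist2_eq_dist, dist_comm]

lemma eDist2_triangle (p q r : ℤ × ℤ) : eDist2 p r ≤ eDist2 p q + eDist2 q r := by
  rw [eDist2_eq_dist, eDist2_eq_dist, eDist2_eq_dist]; exact dist_triangle _ _ _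

lemma eDist2_eq_zero {p q : ℤ × ℤ} (h : eDist2 p q = 0) : p = q := by
  rw [eDist2_eq_dist, dist_eq_zero] at h
  have h1 : emb2 p 0 = emb2 q 0 := by rw [h]
  have h2 : emb2 p 1 = emb2 q 1 := by rw [h]
  simp [emb2] at h1 h2
  exact Prod.ext h1 h2

lemma one_le_eDist2 {p q : ℤ × ℤ} (h : p ≠ q) : 1 ≤ eDist2 p q := by
  rw [eDist2, Real.one_le_sqrt]
  have : p.1 ≠ q.1 ∨ p.2 ≠ q.2 := by
    by_contra hc; push_neg at hc; exact h (Prod.ext hc.1 hc.2)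
  rcases this with h1 | h1
  · have : (1 : ℝ) ≤ ((p.1 : ℝ) - q.1) ^ 2 := by
      have : (1 : ℤ) ≤ (p.1 - q.1) ^ 2 := by
        rcases lt_or_gt_of_ne (sub_ne_zero.mpr h1) with h2 | h2 <;> nlinarith
      calc (1:ℝ) = ((1:ℤ):ℝ) := by norm_num
        _ ≤ (((p.1 - q.1)^2 : ℤ) : ℝ) := by exact_mod_cast this
        _ = ((p.1:ℝ) - q.1)^2 := by push_cast; ring
    nlinarith [sq_nonneg ((p.2:ℝ) - q.2)]
  · have : (1 : ℝ) ≤ ((p.2 : ℝ) - q.2) ^ 2 := by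
      have : (1 : ℤ) ≤ (p.2 - q.2) ^ 2 := by
        rcases lt_or_gt_of_ne (sub_ne_zero.mpr h1) with h2 | h2 <;> nlinarith
      calc (1:ℝ) = ((1:ℤ):ℝ) := by norm_num
        _ ≤ (((p.2 - q.2)^2 : ℤ) : ℝ) := by exact_mod_cast this
        _ = ((p.2:ℝ) - q.2)^2 := by push_cast; ring
    nlinarith [sq_nonneg ((p.1:ℝ) - q.1)]



/-- sup-norm distance, as a natural number -/
def dN (u v : ℤ × ℤ) : ℕ := max (v.1 - u.1).natAbs (v.2 - u.2).natAbs

lemma dN_le_eDist2 (u v : ℤ × ℤ) : (dN u v : ℝ) ≤ eDist2 u v := by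
  have h1 : (((v.1 - u.1).natAbs : ℕ) : ℝ) ≤ eDist2 u v := by
    rw [Nat.cast_natAbs]
    push_cast
    rw [eDist2, abs_sub_comm]
    calc |(u.1:ℝ) - v.1| = Real.sqrt (((u.1:ℝ) - v.1)^2) := (Real.sqrt_sq_eq_abs _).symm
      _ ≤ _ := Real.sqrt_le_sqrt (by nlinarith [sq_nonneg ((u.2:ℝ) - v.2)])
  have h2 : (((v.2 - u.2).natAbs : ℕ) : ℝ) ≤ eDist2 u v := by
    rw [Nat.cast_natAbs]
    push_cast
    rw [eDist2, abs_sub_comm]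
    calc |(u.2:ℝ) - v.2| = Real.sqrt (((u.2:ℝ) - v.2)^2) := (Real.sqrt_sq_eq_abs _).symm
      _ ≤ _ := Real.sqrt_le_sqrt (by nlinarith [sq_nonneg ((u.1:ℝ) - v.1)])
  rw [dN]
  rcases max_cases (v.1 - u.1).natAbs (v.2 - u.2).natAbs with ⟨h, _⟩ | ⟨h, _⟩ <;>
    rw [h] <;> assumption

/-- Counting: few points at small sup-distance. -/
lemma count_close (u : ℤ × ℤ) (T : Finset (ℤ × ℤ)) (hu : u ∉ T) (r : ℕ) (hr : 1 ≤ r) :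
    (T.filter (fun v => dN u v < r)).card ≤ (2 * r - 1) ^ 2 - 1 := by
  classical
  have hsub : T.filter (fun v => dN u v < r) ⊆
      ((Finset.Icc (u.1 - (r - 1 : ℕ)) (u.1 + (r - 1 : ℕ))) ×ˢ
       (Finset.Icc (u.2 - (r - 1 : ℕ)) (u.2 + (r - 1 : ℕ)))).erase u := by
    intro v hv
    rw [Finset.mem_filter] at hv
    obtain ⟨hvT, hd⟩ := hv
    rw [Finset.mem_erase]
    constructor
    · rintro rfl; exact hu hvT
    · rw [Finset.mem_product, Finset.mem_Icc, Finset.mem_Icc]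
      have h1 : (v.1 - u.1).natAbs < r := lt_of_le_of_lt (le_max_left _ _) hd
      have h2 : (v.2 - u.2).natAbs < r := lt_of_le_of_lt (le_max_right _ _) hd
      have h1' : (v.1 - u.1).natAbs ≤ r - 1 := by omega
      have h2' : (v.2 - u.2).natAbs ≤ r - 1 := by omega
      omega
  have hmem : u ∈ ((Finset.Icc (u.1 - (r - 1 : ℕ)) (u.1 + (r - 1 : ℕ))) ×ˢ
       (Finset.Icc (u.2 - (r - 1 : ℕ)) (u.2 + (r - 1 : ℕ)))) := by
    rw [Finset.mem_product, Finset.mem_Icc, Finset.mem_Icc]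
    have : (0:ℤ) ≤ ((r-1:ℕ):ℤ) := Int.natCast_nonneg _
    omega
  calc (T.filter (fun v => dN u v < r)).card ≤ _ := Finset.card_le_card hsub
    _ = _ - 1 := Finset.card_erase_of_mem hmem
    _ ≤ (2*r-1)^2 - 1 := by
        apply Nat.sub_le_sub_right
        rw [Finset.card_product, Int.card_Icc, Int.card_Icc]
        have : (u.1 + (r - 1 : ℕ) + 1 - (u.1 - (r - 1 : ℕ))) = (2*(r:ℤ) - 1) := by
          push_cast [Nat.cast_sub hr]; ring
        rw [this]
        have : (u.2 + (r - 1 : ℕ) + 1 - (u.2 - (r - 1 : ℕ))) = (2*(r:ℤ) - 1) := by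
          push_cast [Nat.cast_sub hr]; ring
        rw [this]
        have h : (2*(r:ℤ) - 1).toNat = 2*r - 1 := by omega
        rw [h, sq]



/-- layer cake -/
lemma layer_cake (u : ℤ × ℤ) (T : Finset (ℤ × ℤ)) (R : ℕ) :
    ∑ r ∈ Finset.Icc 1 R, (T.filter (fun v => r ≤ dN u v)).card ≤ ∑ v ∈ T, dN u v := by
  classical
  have : ∀ r, (T.filter (fun v => r ≤ dN u v)).card = ∑ v ∈ T, if r ≤ dN u v then 1 else 0 :=
    fun r => Finset.card_filter _ _
  simp_rw [this]
  rw [Finset.sum_comm]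
  apply Finset.sum_le_sum
  intro v _
  calc ∑ r ∈ Finset.Icc 1 R, (if r ≤ dN u v then 1 else 0)
      = ((Finset.Icc 1 R).filter (fun r => r ≤ dN u v)).card := (Finset.card_filter _ _).symm
    _ ≤ (Finset.Icc 1 (dN u v)).card := by
        apply Finset.card_le_card
        intro r hr
        rw [Finset.mem_filter, Finset.mem_Icc] at hr
        rw [Finset.mem_Icc]
        exact ⟨hr.1.1, hr.2⟩
    _ = dN u v := by rw [Nat.card_Icc]; omega

/-- closed form -/
lemma closed_form (m : ℝ) (R : ℕ) :
    ∑ r ∈ Finset.Icc 1 R, (m + 1 - (2 * (r:ℝ) - 1) ^ 2) = R * (3 * m + 4 - 4 * (R:ℝ)^2) / 3 := by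
  induction R with
  | zero => simp
  | succ n ih =>
    rw [Finset.sum_Icc_succ_top (by omega), ih]
    push_cast
    ring

lemma numeric_R (m : ℕ) : ∃ R : ℕ,
    (m : ℝ) * Real.sqrt m / 4 ≤ (R : ℝ) * (3 * (m:ℝ) + 4 - 4 * (R:ℝ)^2) / 3 := by
  set t := Real.sqrt m with ht
  have ht0 : 0 ≤ t := Real.sqrt_nonneg _
  have ht2 : t ^ 2 = (m : ℝ) := Real.sq_sqrt (by positivity)
  by_cases h16 : m ≤ 16
  · refine ⟨1, ?_⟩
    have : t ≤ 4 := by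
      nlinarith [show (m:ℝ) ≤ 16 by exact_mod_cast h16]
    nlinarith
  · by_cases h47 : m ≤ 47
    · refine ⟨2, ?_⟩
      have hm17 : (17:ℝ) ≤ m := by exact_mod_cast by omega
      have hm47 : (m:ℝ) ≤ 47 := by exact_mod_cast h47
      have ht7 : t ≤ 7 := by nlinarith
      have ht4 : 4 ≤ t := by nlinarith
      nlinarith [mul_nonneg (mul_nonneg (sub_nonneg.mpr ht7) (sub_nonneg.mpr ht4)) ht0,
        mul_nonneg (show (0:ℝ) ≤ 8 - t by linarith) (show (0:ℝ) ≤ 3*t - 4 by linarith)]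
    · by_cases h63 : m ≤ 63
      · refine ⟨3, ?_⟩
        have hm48 : (48:ℝ) ≤ m := by exact_mod_cast by omega
        have hm63 : (m:ℝ) ≤ 63 := by exact_mod_cast h63
        have ht8 : t ≤ 8 := by nlinarith
        have ht6 : 6 ≤ t := by nlinarith
        nlinarith [mul_nonneg (mul_nonneg (sub_nonneg.mpr ht8) (sub_nonneg.mpr ht6)) ht0,
          mul_nonneg (show (0:ℝ) ≤ 20 - t by linarith) (show (0:ℝ) ≤ t - 4 by linarith)]
      · refine ⟨⌈t / 2⌉₊, ?_⟩
        have hm64 : (64:ℝ) ≤ m := by exact_mod_cast by omega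
        have ht8 : 8 ≤ t := by nlinarith
        set r := (⌈t / 2⌉₊ : ℝ) with hr
        have h1 : t / 2 ≤ r := Nat.le_ceil _
        have h2 : r ≤ t / 2 + 1 := le_of_lt (Nat.ceil_lt_add_one (by positivity))
        rw [← ht2]
        have hd : 0 ≤ r - t/2 := by linarith
        have hd1 : r - t/2 ≤ 1 := by linarith
        nlinarith [mul_nonneg hd ht0, mul_nonneg (mul_nonneg hd ht0) ht0,
          mul_nonneg (mul_nonneg hd hd) (sub_nonneg.mpr hd1),
          mul_nonneg (mul_nonneg hd hd) hd,
          mul_nonneg (mul_nonneg hd (sub_nonneg.mpr hd1)) ht0]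
lemma grid_spread (u : ℤ × ℤ) (T : Finset (ℤ × ℤ)) (hu : u ∈ T) :
    ((T.card : ℝ) - 1) * Real.sqrt ((T.card : ℝ) - 1) / 4 ≤ ∑ v ∈ T, eDist2 u v := by
  classical
  set T' := T.erase u with hT'
  have huT' : u ∉ T' := Finset.notMem_erase _ _
  set m := T'.card with hm
  have hcard : (T.card : ℝ) - 1 = (m : ℝ) := by
    rw [hm, hT', Finset.card_erase_of_mem hu]
    have : 1 ≤ T.card := Finset.card_pos.mpr ⟨u, hu⟩
    push_cast [Nat.cast_sub this]
    ring
  rw [hcard]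
  -- reduce to sum over T'
  have hsum : ∑ v ∈ T, eDist2 u v = ∑ v ∈ T', eDist2 u v := by
    rw [hT', ← Finset.add_sum_erase T _ hu, eDist2_self, zero_add]
  rw [hsum]
  obtain ⟨R, hR⟩ := numeric_R m
  -- counting bound for each r
  have hcount : ∀ r ∈ Finset.Icc 1 R,
      (m : ℝ) + 1 - (2 * (r:ℝ) - 1)^2 ≤ ((T'.filter (fun v => r ≤ dN u v)).card : ℝ) := by
    intro r hr
    rw [Finset.mem_Icc] at hr
    have hr1 : 1 ≤ r := hr.1
    have hlt := count_close u T' huT' r hr1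
    have hsplit := Finset.card_filter_add_card_filter_not (s := T')
      (p := fun v => r ≤ dN u v)
    have heq : ∀ v : ℤ × ℤ, (¬ r ≤ dN u v) ↔ dN u v < r := fun v => not_le
    have hlt' : (T'.filter (fun v => ¬ r ≤ dN u v)).card ≤ (2*r-1)^2 - 1 := by
      calc (T'.filter (fun v => ¬ r ≤ dN u v)).card
          = (T'.filter (fun v => dN u v < r)).card := by
            congr 1; apply Finset.filter_congr; intro v _; simp [heq v]
        _ ≤ _ := hlt
    have h1 : 1 ≤ (2*r-1)^2 := by
      have : 1 ≤ 2*r-1 := by omega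
      nlinarith
    have hcast : (((2*r-1)^2 - 1 : ℕ) : ℝ) = (2*(r:ℝ) - 1)^2 - 1 := by
      rw [Nat.cast_sub h1, Nat.cast_pow, Nat.cast_sub (show 1 ≤ 2*r by omega)]
      push_cast; ring
    have := hsplit
    have h2 : ((T'.filter (fun v => r ≤ dN u v)).card : ℝ)
        + ((T'.filter (fun v => ¬ r ≤ dN u v)).card : ℝ) = (m : ℝ) := by
      exact_mod_cast congrArg (Nat.cast : ℕ → ℝ) this
    have h3 : ((T'.filter (fun v => ¬ r ≤ dN u v)).card : ℝ) ≤ (2*(r:ℝ)-1)^2 - 1 := by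
      rw [← hcast]; exact_mod_cast hlt'
    linarith
  calc (m : ℝ) * Real.sqrt m / 4
      ≤ (R : ℝ) * (3 * (m:ℝ) + 4 - 4 * (R:ℝ)^2) / 3 := hR
    _ = ∑ r ∈ Finset.Icc 1 R, ((m:ℝ) + 1 - (2 * (r:ℝ) - 1)^2) := (closed_form m R).symm
    _ ≤ ∑ r ∈ Finset.Icc 1 R, ((T'.filter (fun v => r ≤ dN u v)).card : ℝ) :=
        Finset.sum_le_sum hcount
    _ = ((∑ r ∈ Finset.Icc 1 R, (T'.filter (fun v => r ≤ dN u v)).card : ℕ) : ℝ) := by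
        push_cast; ring
    _ ≤ ((∑ v ∈ T', dN u v : ℕ) : ℝ) := by exact_mod_cast layer_cake u T' R
    _ = ∑ v ∈ T', (dN u v : ℝ) := by push_cast; ring
    _ ≤ ∑ v ∈ T', eDist2 u v := Finset.sum_le_sum (fun v _ => dN_le_eDist2 u v)

section AuxGap

variable {s : ℤ}

lemma one_le_sqrt2s (hs : 2 ≤ s) : 1 ≤ Real.sqrt (2 * (s : ℝ) ^ 2) := by
  rw [Real.one_le_sqrt]
  have : (2:ℝ) ≤ (s:ℝ) := by exact_mod_cast hs
  nlinarith

lemma self_le_sqrt2s (hs : 2 ≤ s) : (s : ℝ) ≤ Real.sqrt (2 * (s : ℝ) ^ 2) := by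
  have h0 : (0:ℝ) ≤ (s:ℝ) := by exact_mod_cast (by omega : (0:ℤ) ≤ s)
  calc (s:ℝ) = Real.sqrt ((s:ℝ)^2) := (Real.sqrt_sq h0).symm
    _ ≤ _ := Real.sqrt_le_sqrt (by nlinarith)

lemma eDist2_le_sqrt2s (hs : 2 ≤ s) {p q : ℤ × ℤ}
    (hp : p ∈ cornerFreeGrid s) (hq : q ∈ cornerFreeGrid s) :
    eDist2 p q ≤ Real.sqrt (2 * (s : ℝ) ^ 2) := by
  obtain ⟨⟨hp1, hp2, hp3, hp4⟩, -⟩ := hp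
  obtain ⟨⟨hq1, hq2, hq3, hq4⟩, -⟩ := hq
  apply Real.sqrt_le_sqrt
  have b1 : ((p.1:ℝ) - q.1)^2 ≤ (s:ℝ)^2 := by
    have h1 : (0:ℝ) ≤ p.1 := by exact_mod_cast hp1
    have h2 : (p.1:ℝ) < (s:ℝ) := by exact_mod_cast hp2
    have h3 : (0:ℝ) ≤ q.1 := by exact_mod_cast hq1
    have h4 : (q.1:ℝ) < (s:ℝ) := by exact_mod_cast hq2
    nlinarith
  have b2 : ((p.2:ℝ) - q.2)^2 ≤ (s:ℝ)^2 := by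
    have h1 : (0:ℝ) ≤ p.2 := by exact_mod_cast hp3
    have h2 : (p.2:ℝ) < (s:ℝ) := by exact_mod_cast hp4
    have h3 : (0:ℝ) ≤ q.2 := by exact_mod_cast hq3
    have h4 : (q.2:ℝ) < (s:ℝ) := by exact_mod_cast hq4
    nlinarith
  linarith

lemma gapDist_self (s : ℤ) (u : GapVertex s) : gapDist s u u = 0 := by
  cases u with
  | inl x => exact eDist2_self x.1
  | inr a => simp [gapDist]

lemma gapDist_nonneg (s : ℤ) (u v : GapVertex s) : 0 ≤ gapDist s u v := by
  cases u <;> cases v <;> simp [gapDist, Real.sqrt_nonneg]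
  · exact eDist2_nonneg _ _
  · split <;> norm_num

lemma one_le_gapDist (hs : 2 ≤ s) {u v : GapVertex s} (h : u ≠ v) : 1 ≤ gapDist s u v := by
  cases u with
  | inl x =>
    cases v with
    | inl y =>
      apply one_le_eDist2
      intro hxy
      exact h (congrArg Sum.inl (Subtype.ext hxy))
    | inr b => exact one_le_sqrt2s hs
  | inr a =>
    cases v with
    | inl y => exact one_le_sqrt2s hs
    | inr b =>
      show 1 ≤ if a = b then (0:ℝ) else 1
      rw [if_neg (fun hab => h (congrArg Sum.inr hab))]

lemma gapDist_metric (s : ℤ) (hs : 2 ≤ s) : IsMetric (gapDist s) := by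
  have hsq : 1 ≤ Real.sqrt (2 * (s : ℝ) ^ 2) := one_le_sqrt2s hs
  have hsq0 : 0 ≤ Real.sqrt (2 * (s : ℝ) ^ 2) := Real.sqrt_nonneg _
  refine ⟨gapDist_self s, gapDist_nonneg s, ?_, ?_, ?_⟩
  · intro x y
    cases x <;> cases y <;> simp [gapDist]
    · exact eDist2_comm _ _
    · rename_i a b
      rcases eq_or_ne a b with rfl | h
      · rfl
      · rw [if_neg h, if_neg (Ne.symm h)]
  · intro x y z
    cases x with
    | inl x =>
      cases y with
      | inl y =>
        cases z with
        | inl z => exact eDist2_triangle x.1 y.1 z.1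
        | inr c =>
          show Real.sqrt _ ≤ eDist2 x.1 y.1 + Real.sqrt _
          linarith [eDist2_nonneg x.1 y.1]
      | inr b =>
        cases z with
        | inl z =>
          show eDist2 x.1 z.1 ≤ Real.sqrt _ + Real.sqrt _
          have := eDist2_le_sqrt2s hs x.2 z.2
          linarith
        | inr c =>
          show Real.sqrt _ ≤ Real.sqrt _ + (if b = c then (0:ℝ) else 1)
          split <;> norm_num
    | inr a =>
      cases y with
      | inl y =>
        cases z with
        | inl z =>
          show Real.sqrt _ ≤ Real.sqrt _ + eDist2 y.1 z.1
          linarith [eDist2_nonneg y.1 z.1]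
        | inr c =>
          show (if a = c then (0:ℝ) else 1) ≤ Real.sqrt _ + Real.sqrt _
          split
          · positivity
          · linarith
      | inr b =>
        cases z with
        | inl z =>
          show Real.sqrt _ ≤ (if a = b then (0:ℝ) else 1) + Real.sqrt _
          split <;> norm_num
        | inr c =>
          show (if a = c then (0:ℝ) else 1) ≤ (if a = b then (0:ℝ) else 1) + (if b = c then (0:ℝ) else 1)
          rcases eq_or_ne a c with rfl | hac
          · rw [if_pos rfl]
            split <;> split <;> norm_num
          · rw [if_neg hac]
            rcases eq_or_ne a b with rfl | hab
            · rw [if_pos rfl, if_neg hac]; norm_num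
            · rw [if_neg hab]
              split <;> norm_num
  · intro x y
    cases x with
    | inl x =>
      cases y with
      | inl y =>
        intro h
        exact congrArg Sum.inl (Subtype.ext (eDist2_eq_zero h))
      | inr b =>
        intro h
        exfalso
        have : (1:ℝ) ≤ 0 := h ▸ hsq
        linarith
    | inr a =>
      cases y with
      | inl y =>
        intro h
        exfalso
        have : (1:ℝ) ≤ 0 := h ▸ hsq
        linarith
      | inr b =>
        intro h
        rcases eq_or_ne a b with rfl | hab
        · rfl
        · exfalso
          have : (if a = b then (0:ℝ) else 1) = 0 := h
          rw [if_neg hab] at this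
          norm_num at this

lemma rpow_three_halves {x : ℝ} (hx : 0 ≤ x) : x ^ ((3:ℝ)/2) = x * Real.sqrt x := by
  rcases eq_or_lt_of_le hx with h | h
  · rw [← h, Real.zero_rpow (by norm_num), Real.sqrt_zero, mul_zero]
  · rw [show (3:ℝ)/2 = 1 + 1/2 by norm_num, Real.rpow_add h, Real.rpow_one, ← Real.sqrt_eq_rpow]

end AuxGap

set_option maxHeartbeats 1000000 in
theorem gap_construction_feasible (s : ℤ) (hs : 2 ≤ s) :
    IsMetric (gapDist s) ∧
    ∀ S : Finset (GapVertex s), ∀ u ∈ S,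
      ((S.card : ℝ) - 1) ^ ((3 : ℝ) / 2) / 4 ≤ ∑ v ∈ S, gapDist s u v := by
  classical
  refine ⟨gapDist_metric s hs, ?_⟩
  intro S u huS
  have hs0 : (0:ℝ) ≤ (s:ℝ) := by exact_mod_cast (by omega : (0:ℤ) ≤ s)
  have hsqrt2s : (s:ℝ) ≤ Real.sqrt (2 * (s:ℝ)^2) := self_le_sqrt2s hs
  have hsq0 : 0 ≤ Real.sqrt (2 * (s : ℝ) ^ 2) := Real.sqrt_nonneg _
  have hcard1 : 1 ≤ S.card := Finset.card_pos.mpr ⟨u, huS⟩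
  set k : ℕ := S.card - 1 with hkdef
  have hk : (S.card : ℝ) - 1 = (k : ℝ) := by
    rw [hkdef, Nat.cast_sub hcard1]; norm_num
  have hsqk : 0 ≤ Real.sqrt (k:ℝ) := Real.sqrt_nonneg _
  rw [hk, rpow_three_halves (by positivity)]
  -- the partition of S into grid part P and extras part Q
  set P : Finset (GapVertex s) := S.filter (fun v => Sum.isLeft v = true) with hPdef
  set Q : Finset (GapVertex s) := S.filter (fun v => ¬ Sum.isLeft v = true) with hQdef
  have hPQcard : P.card + Q.card = S.card := Finset.card_filter_add_card_filter_not _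
  have hsplit : ∑ v ∈ P, gapDist s u v + ∑ v ∈ Q, gapDist s u v = ∑ v ∈ S, gapDist s u v :=
    Finset.sum_filter_add_sum_filter_not S _ _
  -- Q has at most 2 elements
  have hQ2 : Q.card ≤ 2 := by
    have : Q.card ≤ (Finset.univ : Finset Bool).card := by
      apply Finset.card_le_card_of_injOn (Sum.elim (fun _ => false) id)
      · intro a _; exact Finset.mem_univ _
      · intro a ha b hb hab
        simp only [Finset.coe_filter, Set.mem_setOf_eq, hQdef] at ha hb
        cases a with
        | inl x => exact absurd ((@Finset.mem_filter _ _ (fun _ => @instDecidableNot _ (Classical.propDecidable _)) _ _).mp (Finset.mem_coe.mp ha)).2 (by simp)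
        | inr x =>
          cases b with
          | inl y => exact absurd ((@Finset.mem_filter _ _ (fun _ => @instDecidableNot _ (Classical.propDecidable _)) _ _).mp (Finset.mem_coe.mp hb)).2 (by simp)
          | inr y => simpa using hab
    simpa using this
  -- the extraction map into ℤ × ℤ
  set g : GapVertex s → ℤ × ℤ := Sum.elim Subtype.val (fun _ => ((0,0) : ℤ × ℤ)) with hgdef
  have hginj : Set.InjOn g ↑P := by
    intro a ha b hb hab
    simp only [Finset.coe_filter, Set.mem_setOf_eq, hPdef] at ha hb
    cases a with
    | inr x => simp at ha
    | inl x =>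
      cases b with
      | inr y => simp at hb
      | inl y => exact congrArg Sum.inl (Subtype.ext (by simpa [hgdef] using hab))
  -- the grid points of P are in the corner-free grid, giving a cardinality bound
  have hPcard : P.card ≤ s.toNat * s.toNat - 2 := by
    set box : Finset (ℤ × ℤ) := (Finset.Icc 0 (s-1)) ×ˢ (Finset.Icc 0 (s-1)) with hboxdef
    have hboxcard : box.card = s.toNat * s.toNat := by
      rw [hboxdef, Finset.card_product, Int.card_Icc]
      congr 1 <;> omega
    have hmem_box : ∀ p ∈ cornerFreeGrid s, p ∈ box := by
      intro p hp
      obtain ⟨⟨h1, h2, h3, h4⟩, -⟩ := hp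
      rw [hboxdef, Finset.mem_product, Finset.mem_Icc, Finset.mem_Icc]
      omega
    have hc0 : ((0,0) : ℤ × ℤ) ∈ box := by
      simp only [hboxdef, Finset.mem_product, Finset.mem_Icc]; omega
    have hc1 : ((s-1,s-1) : ℤ × ℤ) ∈ box.erase (0,0) := by
      rw [Finset.mem_erase]
      constructor
      · intro h; rw [Prod.ext_iff] at h; omega
      · simp only [hboxdef, Finset.mem_product, Finset.mem_Icc]; omega
    have hsub : P.card ≤ ((box.erase (0,0)).erase (s-1,s-1)).card := by
      apply Finset.card_le_card_of_injOn g _ hginj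
      intro a ha
      replace ha := Finset.mem_coe.mp ha
      cases a with
      | inr x => exact absurd ((@Finset.mem_filter _ _ (fun _ => Classical.propDecidable _) _ _).mp ha).2 (by simp)
      | inl x =>
        show g (Sum.inl x : GapVertex s) ∈ ((box.erase (0,0)).erase (s-1,s-1))
        rw [Finset.mem_erase, Finset.mem_erase]
        have hx := x.2
        obtain ⟨-, hne0, hne1⟩ := hx
        exact ⟨by simpa [hgdef] using hne1, by simpa [hgdef] using hne0,
          hmem_box _ x.2⟩
    have : ((box.erase (0,0)).erase (s-1,s-1)).card = box.card - 2 := by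
      rw [Finset.card_erase_of_mem hc1, Finset.card_erase_of_mem hc0]
      omega
    omega
  have hScard : S.card ≤ s.toNat * s.toNat := by
    have h4 : 4 ≤ s.toNat * s.toNat := by
      have : 2 ≤ s.toNat := by omega
      nlinarith
    omega
  have hkreal : (k:ℝ) ≤ (s:ℝ)^2 := by
    have h1 : (k:ℝ) ≤ (s.toNat : ℝ) * (s.toNat : ℝ) := by
      have : k ≤ s.toNat * s.toNat := by omega
      exact_mod_cast this
    have h2 : ((s.toNat : ℤ) : ℝ) = (s:ℝ) := by
      rw [Int.toNat_of_nonneg (by omega)]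
    push_cast at h1 h2 ⊢
    nlinarith [h1, h2]
  have hsqk_le : Real.sqrt (k:ℝ) ≤ (s:ℝ) := by
    calc Real.sqrt (k:ℝ) ≤ Real.sqrt ((s:ℝ)^2) := Real.sqrt_le_sqrt hkreal
      _ = (s:ℝ) := Real.sqrt_sq hs0
  cases u with
  | inl x =>
    -- grid case
    set T : Finset (ℤ × ℤ) := P.image g with hTdef
    have hTcard : T.card = P.card := Finset.card_image_of_injOn hginj
    have hxP : (Sum.inl x : GapVertex s) ∈ P := by
      rw [hPdef]; exact (@Finset.mem_filter _ _ (fun _ => Classical.propDecidable _) _ _).mpr ⟨huS, rfl⟩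
    have hxT : x.1 ∈ T := by
      rw [hTdef]
      exact Finset.mem_image_of_mem g hxP
    have hT1 : 1 ≤ T.card := Finset.card_pos.mpr ⟨x.1, hxT⟩
    set m : ℕ := T.card - 1 with hmdef
    set e : ℕ := Q.card with hedef
    have hke : k = m + e := by omega
    have hsumP : ∑ p ∈ T, eDist2 x.1 p = ∑ v ∈ P, gapDist s (Sum.inl x) v := by
      rw [hTdef, Finset.sum_image hginj]
      apply Finset.sum_congr rfl
      intro v hv
      rw [hPdef, Finset.mem_filter] at hv
      cases v with
      | inl y => rfl
      | inr b => simp at hv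
    have hsumQ : ∑ v ∈ Q, gapDist s (Sum.inl x) v = (e:ℝ) * Real.sqrt (2 * (s:ℝ)^2) := by
      have hcg : ∑ v ∈ Q, gapDist s (Sum.inl x) v = ∑ v ∈ Q, Real.sqrt (2 * (s:ℝ)^2) := by
        apply Finset.sum_congr rfl
        intro v hv
        rw [hQdef, Finset.mem_filter] at hv
        cases v with
        | inl y => simp at hv
        | inr b => rfl
      rw [hcg, Finset.sum_const, nsmul_eq_mul, hedef]
    have hgrid := grid_spread x.1 T hxT
    have hTm : (T.card : ℝ) - 1 = (m:ℝ) := by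
      rw [hmdef, Nat.cast_sub hT1]; norm_num
    rw [hTm] at hgrid
    -- main numeric comparison
    have hsqm : Real.sqrt (m:ℝ) ≤ Real.sqrt (k:ℝ) := by
      apply Real.sqrt_le_sqrt; exact_mod_cast (by omega : m ≤ k)
    have hkr : ((k:ℝ)) = (m:ℝ) + (e:ℝ) := by exact_mod_cast congrArg (Nat.cast : ℕ → ℝ) hke
    have key : (k:ℝ) * Real.sqrt k / 4 ≤ (m:ℝ) * Real.sqrt m / 4 + (e:ℝ) * Real.sqrt (2*(s:ℝ)^2) := by
      set a := Real.sqrt (k:ℝ) with ha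
      set b := Real.sqrt (m:ℝ) with hb
      have ha2 : a^2 = (k:ℝ) := Real.sq_sqrt (by positivity)
      have hb2 : b^2 = (m:ℝ) := Real.sq_sqrt (by positivity)
      have hb0 : 0 ≤ b := Real.sqrt_nonneg _
      have step1 : (k:ℝ) * a / 4 ≤ (m:ℝ) * b / 4 + (e:ℝ) * a / 2 := by
        nlinarith [mul_nonneg hb0 (sub_nonneg.mpr hsqm), sq_nonneg (a - b),
          mul_nonneg hsqk (sub_nonneg.mpr hsqm)]
      have step2 : (e:ℝ) * a / 2 ≤ (e:ℝ) * Real.sqrt (2*(s:ℝ)^2) := by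
        have he0 : (0:ℝ) ≤ (e:ℝ) := by positivity
        have : a ≤ Real.sqrt (2*(s:ℝ)^2) := le_trans hsqk_le hsqrt2s
        nlinarith
      linarith
    calc (k:ℝ) * Real.sqrt k / 4
        ≤ (m:ℝ) * Real.sqrt m / 4 + (e:ℝ) * Real.sqrt (2*(s:ℝ)^2) := key
      _ ≤ ∑ p ∈ T, eDist2 x.1 p + (e:ℝ) * Real.sqrt (2*(s:ℝ)^2) := by linarith
      _ = ∑ v ∈ P, gapDist s (Sum.inl x) v + ∑ v ∈ Q, gapDist s (Sum.inl x) v := by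
          rw [hsumP, hsumQ]
      _ = ∑ v ∈ S, gapDist s (Sum.inl x) v := hsplit
  | inr a =>
    by_cases hk16 : k ≤ 16
    -- small case: every distance to a distinct vertex is at least 1
    · have htriv : (k:ℝ) ≤ ∑ v ∈ S, gapDist s (Sum.inr a) v := by
        rw [← Finset.add_sum_erase S _ huS, show gapDist s (Sum.inr a) (Sum.inr a) = 0 from gapDist_self s _]
        have : ∀ v ∈ S.erase (Sum.inr a : GapVertex s), (1:ℝ) ≤ gapDist s (Sum.inr a) v := by
          intro v hv
          exact one_le_gapDist hs (Ne.symm (Finset.ne_of_mem_erase hv))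
        calc (k:ℝ) = ((S.erase (Sum.inr a : GapVertex s)).card : ℝ) := by
              rw [Finset.card_erase_of_mem huS]
            _ = ∑ v ∈ S.erase (Sum.inr a : GapVertex s), (1:ℝ) := by
              rw [Finset.sum_const, nsmul_eq_mul, mul_one]
            _ ≤ _ := Finset.sum_le_sum this
            _ = 0 + ∑ v ∈ S.erase (Sum.inr a : GapVertex s), gapDist s (Sum.inr a) v := by
              ring
      have hsqk4 : Real.sqrt (k:ℝ) ≤ 4 := by
        calc Real.sqrt (k:ℝ) ≤ Real.sqrt (16:ℝ) :=
              Real.sqrt_le_sqrt (by exact_mod_cast hk16)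
          _ = 4 := by
              rw [show (16:ℝ) = 4^2 by norm_num, Real.sqrt_sq (by norm_num)]
      nlinarith [Nat.cast_nonneg (α := ℝ) k]
    · push_neg at hk16
      -- large case: at least k - 1 grid vertices, each at distance √(2s²)
      have hPk : k - 1 ≤ P.card := by omega
      have hsumP : ∑ v ∈ P, gapDist s (Sum.inr a) v = (P.card : ℝ) * Real.sqrt (2 * (s:ℝ)^2) := by
        have hcg : ∑ v ∈ P, gapDist s (Sum.inr a) v = ∑ v ∈ P, Real.sqrt (2 * (s:ℝ)^2) := by
          apply Finset.sum_congr rfl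
          intro v hv
          rw [hPdef, Finset.mem_filter] at hv
          cases v with
          | inr b => simp at hv
          | inl y => rfl
        rw [hcg, Finset.sum_const, nsmul_eq_mul]
      have hsumQ : 0 ≤ ∑ v ∈ Q, gapDist s (Sum.inr a) v :=
        Finset.sum_nonneg (fun v _ => gapDist_nonneg s _ v)
      have hk17 : (17:ℝ) ≤ (k:ℝ) := by exact_mod_cast hk16
      have hPreal : ((k:ℝ) - 1) ≤ (P.card : ℝ) := by
        have : ((k - 1 : ℕ) : ℝ) ≤ (P.card : ℝ) := by exact_mod_cast hPk
        rw [Nat.cast_sub (by omega)] at this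
        push_cast at this ⊢
        linarith
      calc (k:ℝ) * Real.sqrt k / 4
          ≤ (k:ℝ) * (s:ℝ) / 4 := by nlinarith [Nat.cast_nonneg (α := ℝ) k]
        _ ≤ ((k:ℝ) - 1) * (s:ℝ) := by nlinarith
        _ ≤ ((k:ℝ) - 1) * Real.sqrt (2 * (s:ℝ)^2) := by nlinarith
        _ ≤ (P.card : ℝ) * Real.sqrt (2 * (s:ℝ)^2) := by nlinarith
        _ ≤ ∑ v ∈ P, gapDist s (Sum.inr a) v + ∑ v ∈ Q, gapDist s (Sum.inr a) v := by
            rw [hsumP]; linarith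
        _ = ∑ v ∈ S, gapDist s (Sum.inr a) v := hsplit
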